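/- Let G be an n-vertex graph with e edges, edge-colored so that Σ_v c(v) ≤ ρn, with color classes of sizes c_1 ≥ c_2 ≥ ... ≥ c_q (so Σ c_i = e). If r ≥ 18ρ²/ε² and e ≥ n²/4, then c_1 + c_2 + ... + c_r ≥ e − εn²/2. -/

import Mathlib

open Finset
open scoped Classical

/-- The number of distinct colors on edges incident to `v`, for the edge coloring `c`. -/
noncomputable def colorsAt {V : Type*} [Fintype V] (G : SimpleGraph V)
    (c : Sym2 V → ℕ) (v : V) : ℕ :=
  ((G.incidenceFinset v).image c).card

set_option maxHeartbeats 1000000 in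
/-- In a `ρ`-mean colored `n`-vertex graph with at least `n²/4` edges, if
`r ≥ 18ρ²/ε²` then the `r` largest color classes together contain at least `e − εn²/2`
edges; i.e., there is a set `R` of at most `r` colors covering all but at most `εn²/2`
of the edges. -/
theorem top_r_color_classes {V : Type*} [Fintype V] (G : SimpleGraph V)
    (c : Sym2 V → ℕ) (n : ℕ) (hn : Fintype.card V = n)
    (ρ ε : ℝ) (hρ : 1 ≤ ρ) (hε : 0 < ε)
    (hmean : (∑ v, (colorsAt G c v : ℝ)) ≤ ρ * n)
    (r : ℕ) (hr : 18 * ρ ^ 2 / ε ^ 2 ≤ (r : ℝ))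
    (he : (n ^ 2 : ℝ) / 4 ≤ (G.edgeFinset.card : ℝ)) :
    ∃ R : Finset ℕ, R.card ≤ r ∧
      (G.edgeFinset.card : ℝ) - ε * n ^ 2 / 2 ≤
        ((G.edgeFinset.filter (fun e => c e ∈ R)).card : ℝ) := by
  classical
  have hρ0 : (0:ℝ) < ρ := lt_of_lt_of_le one_pos hρ
  -- the total number of edges is at most n^2/2
  have hetop : (G.edgeFinset.card : ℝ) ≤ (n:ℝ)^2 / 2 := by
    have h1 : G.edgeFinset.card ≤ (Fintype.card V).choose 2 :=
      SimpleGraph.card_edgeFinset_le_card_choose_two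
    rw [hn] at h1
    have h5 : n.choose 2 * 2 ≤ n^2 := by
      rw [Nat.choose_two_right]
      calc n*(n-1)/2*2 ≤ n*(n-1) := Nat.div_mul_le_self _ _
        _ ≤ n*n := Nat.mul_le_mul_left n (Nat.sub_le n 1)
        _ = n^2 := (sq n).symm
    have h6 : (G.edgeFinset.card : ℝ) * 2 ≤ (n:ℝ)^2 := by
      calc (G.edgeFinset.card : ℝ) * 2 ≤ (n.choose 2 : ℝ) * 2 := by
            have : (G.edgeFinset.card : ℝ) ≤ (n.choose 2 : ℝ) := by exact_mod_cast h1
            linarith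
        _ ≤ (n:ℝ)^2 := by exact_mod_cast h5
    linarith
  -- trivial cases
  by_cases hε1 : 1 < ε
  · refine ⟨∅, by simp, ?_⟩
    have : (G.edgeFinset.card : ℝ) - ε * n^2/2 ≤ 0 := by nlinarith [sq_nonneg (n:ℝ)]
    calc _ ≤ (0:ℝ) := this
      _ ≤ _ := by positivity
  push_neg at hε1
  by_cases hn0 : n = 0
  · refine ⟨∅, by simp, ?_⟩
    have : (G.edgeFinset.card : ℝ) ≤ 0 := by subst hn0; simpa using hetop
    have h0 : (0:ℝ) ≤ ((G.edgeFinset.filter (fun e => c e ∈ (∅:Finset ℕ))).card : ℝ) := by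
      exact Nat.cast_nonneg _
    nlinarith [sq_nonneg (n:ℝ)]
  have hn1 : (1:ℝ) ≤ n := by exact_mod_cast Nat.one_le_iff_ne_zero.2 hn0
  -- main case
  set E := G.edgeFinset with hEdef
  set CU := E.image c with hCUdef
  set cs : ℕ → ℕ := fun i => (E.filter fun e => c e = i).card with hcs
  set Vs : ℕ → Finset V := fun i => Finset.univ.filter (fun v => ∃ e ∈ E, c e = i ∧ v ∈ e)
    with hVsdef
  -- key identity: sum of colorsAt equals sum of |Vs i|
  have hkey : ∑ v, colorsAt G c v = ∑ i ∈ CU, (Vs i).card := by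
    have h1 : ∀ v : V, colorsAt G c v = (CU.filter (fun i => v ∈ Vs i)).card := by
      intro v
      unfold colorsAt
      congr 1
      ext i
      constructor
      · intro hi
        rw [mem_image] at hi
        obtain ⟨e, he', rfl⟩ := hi
        rw [SimpleGraph.incidenceFinset_eq_filter, mem_filter] at he'
        refine mem_filter.2 ⟨mem_image_of_mem c he'.1, ?_⟩
        exact mem_filter.2 ⟨mem_univ v, e, he'.1, rfl, he'.2⟩
      · intro hi
        obtain ⟨e, heE, hci, hve⟩ := (mem_filter.1 (mem_filter.1 hi).2).2
        refine mem_image.2 ⟨e, ?_, hci⟩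
        rw [SimpleGraph.incidenceFinset_eq_filter, mem_filter]
        exact ⟨heE, hve⟩
    calc ∑ v, colorsAt G c v = ∑ v, ∑ i ∈ CU, if v ∈ Vs i then 1 else 0 := by
          simp only [h1, Finset.card_filter]
      _ = ∑ i ∈ CU, ∑ v, if v ∈ Vs i then 1 else 0 := Finset.sum_comm
      _ = ∑ i ∈ CU, (Vs i).card := by
          refine Finset.sum_congr rfl fun i _ => ?_
          rw [← Finset.card_filter]
          congr 1
          exact (Finset.filter_univ_mem _)
  -- class size is at most |Vs i|^2
  have hsq : ∀ i ∈ CU, cs i ≤ (Vs i).card ^ 2 := by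
    intro i hi
    have hsub : E.filter (fun e => c e = i) ⊆ (Vs i).sym2 := by
      intro e heh
      simp only [mem_filter] at heh
      induction e with
      | h a b =>
        rw [Finset.mk_mem_sym2_iff]
        constructor <;>
        · simp only [hVsdef, mem_filter, mem_univ, true_and]
          exact ⟨s(a,b), heh.1, heh.2, by simp⟩
    have h1 : cs i ≤ (Vs i).sym2.card := Finset.card_le_card hsub
    rw [Finset.card_sym2] at h1
    have hk1 : 1 ≤ (Vs i).card := by
      rw [hCUdef, mem_image] at hi
      obtain ⟨e, heE, rfl⟩ := hi
      refine Finset.card_pos.2 ⟨e.out.1, ?_⟩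
      refine mem_filter.2 ⟨mem_univ _, e, heE, rfl, ?_⟩
      exact Sym2.out_fst_mem e
    set k := (Vs i).card
    have h2 : (k+1)*k ≤ 2*(k^2) := by nlinarith
    calc cs i ≤ (k+1).choose 2 := h1
      _ = (k+1) * k / 2 := Nat.choose_two_right (k+1)
      _ ≤ 2*(k^2)/2 := Nat.div_le_div_right h2
      _ = k ^ 2 := Nat.mul_div_cancel_left _ two_pos
  -- hence sqrt (cs i) ≤ |Vs i|
  have hsqrt : ∀ i ∈ CU, Real.sqrt (cs i) ≤ ((Vs i).card : ℝ) := by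
    intro i hi
    have := hsq i hi
    have h2 : (cs i : ℝ) ≤ ((Vs i).card : ℝ)^2 := by exact_mod_cast this
    calc Real.sqrt (cs i) ≤ Real.sqrt (((Vs i).card : ℝ)^2) := Real.sqrt_le_sqrt h2
      _ = ((Vs i).card : ℝ) := Real.sqrt_sq (Nat.cast_nonneg _)
  -- total vertex-color incidence bound
  have htot : ∑ i ∈ CU, ((Vs i).card : ℝ) ≤ ρ * n := by
    calc ∑ i ∈ CU, ((Vs i).card : ℝ) = ∑ v, (colorsAt G c v : ℝ) := by
          rw [← Nat.cast_sum, ← Nat.cast_sum, hkey]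
      _ ≤ ρ * n := hmean
  -- threshold
  set s : ℝ := ε * n / (2 * ρ) with hsdef
  have hs0 : 0 < s := by positivity
  set B := CU.filter (fun i => s^2 < (cs i : ℝ)) with hBdef
  have hBsub : B ⊆ CU := Finset.filter_subset _ _
  -- big colors have sqrt at least s
  have hBbig : ∀ i ∈ B, s ≤ Real.sqrt (cs i) := by
    intro i hi
    rw [hBdef, mem_filter] at hi
    have := Real.sqrt_le_sqrt hi.2.le
    rwa [Real.sqrt_sq hs0.le] at this
  -- |B| * s ≤ ρ n
  have hBcard : (B.card : ℝ) * s ≤ ρ * n := by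
    calc (B.card : ℝ) * s = ∑ _i ∈ B, s := by rw [Finset.sum_const, nsmul_eq_mul]
      _ ≤ ∑ i ∈ B, ((Vs i).card : ℝ) :=
          Finset.sum_le_sum fun i hi => le_trans (hBbig i hi) (hsqrt i (hBsub hi))
      _ ≤ ∑ i ∈ CU, ((Vs i).card : ℝ) :=
          Finset.sum_le_sum_of_subset_of_nonneg hBsub (fun i _ _ => Nat.cast_nonneg _)
      _ ≤ ρ * n := htot
  -- so |B| ≤ r
  have hBr : B.card ≤ r := by
    have hr' : 18 * ρ^2 ≤ (r:ℝ) * ε^2 := by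
      rw [div_le_iff₀ (by positivity)] at hr; exact hr
    have h1 : (B.card : ℝ) * (ε * n) ≤ 2 * ρ^2 * n := by
      have h2 : (B.card : ℝ) * (ε * n) / (2*ρ) ≤ ρ * n := by
        rw [hsdef] at hBcard
        rw [mul_div_assoc] at hBcard ⊢
        convert hBcard using 2
        ring
      have h2' := (div_le_iff₀ (by positivity : (0:ℝ) < 2*ρ)).1 h2
      calc (B.card : ℝ) * (ε * n) ≤ ρ * n * (2*ρ) := h2'
        _ = 2 * ρ^2 * n := by ring
    have hn0' : (0:ℝ) < n := by linarith
    have h3 : (B.card : ℝ) * ε ≤ 2 * ρ^2 := by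
      apply le_of_mul_le_mul_right _ hn0'
      calc (B.card : ℝ) * ε * n = (B.card : ℝ) * (ε * n) := by ring
        _ ≤ 2 * ρ^2 * n := h1
    have h5 : (B.card : ℝ) * ε^2 ≤ (r:ℝ) * ε^2 := by
      nlinarith [mul_le_mul_of_nonneg_right h3 hε.le, sq_nonneg ρ]
    have h4 : (B.card : ℝ) ≤ (r:ℝ) := le_of_mul_le_mul_right h5 (by positivity)
    exact_mod_cast h4
  -- the tail: edges with color not in B
  have htail : ((E.filter (fun e => c e ∉ B)).card : ℝ) ≤ ε * (n:ℝ)^2 / 2 := by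
    set S := CU.filter (fun i => ¬ s^2 < (cs i : ℝ)) with hSdef
    have hcount : (E.filter (fun e => c e ∉ B)).card = ∑ i ∈ S, cs i := by
      refine (Finset.card_eq_sum_card_fiberwise (f := c) (t := S) ?_).trans ?_
      · intro e heh
        simp only [Finset.mem_coe, mem_filter] at heh ⊢
        rw [hSdef, mem_filter]
        refine ⟨mem_image_of_mem c heh.1, ?_⟩
        intro hlt
        exact heh.2 (by rw [hBdef, mem_filter]; exact ⟨mem_image_of_mem c heh.1, hlt⟩)
      · refine Finset.sum_congr rfl fun i hi => ?_
        rw [hSdef, mem_filter] at hi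
        congr 1
        ext e
        simp only [mem_filter, hBdef]
        constructor
        · rintro ⟨⟨heE, -⟩, hci⟩; exact ⟨heE, hci⟩
        · rintro ⟨heE, hci⟩
          refine ⟨⟨heE, fun hB => ?_⟩, hci⟩
          rw [hci] at hB
          exact hi.2 hB.2
    rw [hcount]
    push_cast
    calc ∑ i ∈ S, (cs i : ℝ)
        = ∑ i ∈ S, Real.sqrt (cs i) * Real.sqrt (cs i) := by
          refine Finset.sum_congr rfl fun i _ => ?_
          rw [Real.mul_self_sqrt (Nat.cast_nonneg _)]
      _ ≤ ∑ i ∈ S, s * ((Vs i).card : ℝ) := by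
          refine Finset.sum_le_sum fun i hi => ?_
          rw [hSdef, mem_filter] at hi
          have h1 : Real.sqrt (cs i) ≤ s := by
            have h2 : (cs i : ℝ) ≤ s^2 := not_lt.1 hi.2
            calc Real.sqrt (cs i) ≤ Real.sqrt (s^2) := Real.sqrt_le_sqrt h2
              _ = s := Real.sqrt_sq hs0.le
          have h3 := hsqrt i hi.1
          have h4 : (0:ℝ) ≤ Real.sqrt (cs i) := Real.sqrt_nonneg _
          nlinarith
      _ = s * ∑ i ∈ S, ((Vs i).card : ℝ) := by rw [Finset.mul_sum]
      _ ≤ s * (ρ * n) := by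
          refine mul_le_mul_of_nonneg_left ?_ hs0.le
          calc ∑ i ∈ S, ((Vs i).card : ℝ) ≤ ∑ i ∈ CU, ((Vs i).card : ℝ) :=
              Finset.sum_le_sum_of_subset_of_nonneg (Finset.filter_subset _ _)
                (fun i _ _ => Nat.cast_nonneg _)
            _ ≤ ρ * n := htot
      _ = ε * (n:ℝ)^2 / 2 := by rw [hsdef]; field_simp
  -- conclude
  refine ⟨B, hBr, ?_⟩
  have hsplit : (E.filter (fun e => c e ∈ B)).card + (E.filter (fun e => c e ∉ B)).card
      = E.card := Finset.card_filter_add_card_filter_not _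
  have : ((E.filter (fun e => c e ∈ B)).card : ℝ)
      = (E.card : ℝ) - ((E.filter (fun e => c e ∉ B)).card : ℝ) := by
    have := hsplit
    push_cast [← this]
    ring
  rw [hEdef] at this ⊢
  rw [this]
  have := htail
  rw [hEdef] at this
  linarith [this]
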